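/- Let Λ be a finite poset, A = ℤ[v, v^{-1}], and M a free A-module with basis {u_λ}. Let ι : M → M be an additive involution satisfying ι(p·x) = p̄·ι(x) where p̄ is the ring involution v ↦ v^{-1}, and suppose ι(u_μ) = Σ_λ r_{λ,μ} u_λ with r_{μ,μ} = 1 and r_{λ,μ} = 0 unless λ ≤ μ. Then for each μ ∈ Λ there exists a unique element c_μ ∈ M with ι(c_μ) = c_μ and c_μ ∈ u_μ + Σ_{λ < μ} v^{-1}ℤ[v^{-1}] u_λ. -/

import Mathlib

open Finset LaurentPolynomial

namespace KLAux

variable {Λ : Type*} [Fintype Λ] [PartialOrder Λ] [DecidableEq Λ]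
    [DecidableRel ((· ≤ ·) : Λ → Λ → Prop)]
    (ι : (Λ →₀ LaurentPolynomial ℤ) →+ (Λ →₀ LaurentPolynomial ℤ))
    (hsemi : ∀ (p : LaurentPolynomial ℤ) (x : Λ →₀ LaurentPolynomial ℤ),
      ι (p • x) = (invert p : LaurentPolynomial ℤ) • ι x)
    (hinv : ∀ x, ι (ι x) = x)
    (r : Λ → Λ → LaurentPolynomial ℤ)
    (hr : ∀ μ : Λ, ι (Finsupp.single μ 1)
      = ∑ l ∈ univ.filter (fun l => l ≤ μ), Finsupp.single l (r l μ))
    (hdiag : ∀ μ : Λ, r μ μ = 1)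

/-- Positive part of a Laurent polynomial. -/
noncomputable def posP (p : LaurentPolynomial ℤ) : LaurentPolynomial ℤ :=
  (AddMonoidAlgebra.ofCoeff (Finsupp.filter (fun n : ℤ => 0 < n) p.coeff) : LaurentPolynomial ℤ)

/-- Nonnegative part of a Laurent polynomial. -/
noncomputable def nnegP (p : LaurentPolynomial ℤ) : LaurentPolynomial ℤ :=
  (AddMonoidAlgebra.ofCoeff (Finsupp.filter (fun n : ℤ => 0 ≤ n) p.coeff) : LaurentPolynomial ℤ)

lemma posP_apply (p : LaurentPolynomial ℤ) (n : ℤ) :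
    (posP p).coeff n = if 0 < n then p.coeff n else 0 := Finsupp.filter_apply _ _ _

lemma nnegP_apply (p : LaurentPolynomial ℤ) (n : ℤ) :
    (nnegP p).coeff n = if 0 ≤ n then p.coeff n else 0 := Finsupp.filter_apply _ _ _

/-- Downward closed finite set. -/
def DC (D : Finset Λ) : Prop := ∀ ⦃a b : Λ⦄, a ≤ b → b ∈ D → a ∈ D

lemma DC_erase {D : Finset Λ} (hDC : DC D) {lam : Λ}
    (hmax : ∀ b ∈ D, ¬ lam < b) : DC (D.erase lam) := by
  intro a b hab hb
  rcases Finset.mem_erase.mp hb with ⟨hbne, hbD⟩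
  refine Finset.mem_erase.mpr ⟨?_, hDC hab hbD⟩
  rintro rfl
  exact hmax b hbD (lt_of_le_of_ne hab (Ne.symm hbne))

include hr in
lemma ιsingle_apply (μ l : Λ) :
    (ι (Finsupp.single μ 1)) l = if l ≤ μ then r l μ else 0 := by
  rw [hr μ, Finset.sum_apply']
  simp only [Finsupp.single_apply]
  rw [Finset.sum_ite_eq']
  simp

include hsemi hr in
lemma ι_apply (x : Λ →₀ LaurentPolynomial ℤ) (l : Λ) :
    (ι x) l = ∑ ν ∈ (univ : Finset Λ),
      if l ≤ ν then invert (x ν) * r l ν else 0 := by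
  have hx : x = ∑ ν ∈ (univ : Finset Λ),
      (x ν) • Finsupp.single ν (1 : LaurentPolynomial ℤ) := by
    ext a
    rw [Finset.sum_apply']
    simp only [Finsupp.smul_apply, Finsupp.single_apply, smul_eq_mul, mul_ite,
      mul_one, mul_zero]
    rw [Finset.sum_ite_eq']
    simp
  conv_lhs => rw [hx, map_sum]
  rw [Finset.sum_apply']
  refine Finset.sum_congr rfl fun ν _ => ?_
  rw [hsemi, Finsupp.smul_apply, smul_eq_mul, ιsingle_apply ι r hr, mul_ite,
    mul_zero]

include hsemi hr hdiag in
/-- At a coefficient maximal in the support, `ι` acts by `invert`. -/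
lemma apex (x : Λ →₀ LaurentPolynomial ℤ) (l : Λ)
    (h : ∀ ν, l < ν → x ν = 0) : (ι x) l = invert (x l) := by
  rw [ι_apply ι hsemi r hr]
  rw [Finset.sum_eq_single l]
  · rw [if_pos le_rfl, hdiag, mul_one]
  · intro ν _ hne
    by_cases hle : l ≤ ν
    · rw [if_pos hle, h ν (lt_of_le_of_ne hle (Ne.symm hne)), map_zero,
        zero_mul]
    · rw [if_neg hle]
  · intro hl; exact absurd (mem_univ l) hl

include hsemi hinv hr hdiag in
/-- Key solvability lemma: an anti-invariant element supported on a downward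
closed set is of the form `y - ι y` with `y` supported on the same set. -/
lemma lemA : ∀ (N : ℕ) (D : Finset Λ), D.card ≤ N → DC D →
    ∀ d : Λ →₀ LaurentPolynomial ℤ, (∀ l, l ∉ D → d l = 0) → ι d = -d →
    ∃ y : Λ →₀ LaurentPolynomial ℤ, (∀ l, l ∉ D → y l = 0) ∧ y - ι y = d := by
  intro N
  induction N with
  | zero =>
    intro D hcard _ d hsupp hanti
    have hD : D = ∅ := Finset.card_eq_zero.mp (Nat.le_zero.mp hcard)
    have hd : d = 0 := Finsupp.ext fun l =>
      hsupp l (by rw [hD]; exact Finset.notMem_empty l)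
    exact ⟨0, fun l _ => rfl, by rw [map_zero, sub_zero, hd]⟩
  | succ N IH =>
    intro D hcard hDC d hsupp hanti
    by_cases hd0 : d = 0
    · exact ⟨0, fun l _ => rfl, by rw [map_zero, sub_zero, hd0]⟩
    · obtain ⟨l₀, hl₀⟩ : ∃ l₀, d l₀ ≠ 0 := by
        by_contra h
        push_neg at h
        exact hd0 (Finsupp.ext h)
      have hl₀D : l₀ ∈ D := by
        by_contra h
        exact hl₀ (hsupp l₀ h)
      obtain ⟨lam, hlamD, hmax⟩ : ∃ i ∈ D, ∀ x ∈ D, ¬ i < x := by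
        obtain ⟨i, hi⟩ := Finset.exists_maximal ⟨l₀, hl₀D⟩
        exact ⟨i, hi.1, fun x hx h => lt_irrefl _ (lt_of_lt_of_le h (hi.2 hx h.le))⟩
      have hDCe : DC (D.erase lam) := DC_erase hDC hmax
      have hcarde : (D.erase lam).card ≤ N := by
        rw [Finset.card_erase_of_mem hlamD]
        omega
      by_cases hzero : d lam = 0
      · obtain ⟨y, hysupp, hy⟩ := IH (D.erase lam) hcarde hDCe d
          (fun l hl => by
            by_cases hlD : l ∈ D
            · have : l = lam := by
                by_contra hne
                exact hl (Finset.mem_erase.mpr ⟨hne, hlD⟩)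
              rw [this]; exact hzero
            · exact hsupp l hlD)
          hanti
        exact ⟨y, fun l hl => hysupp l (fun hmem => hl (Finset.mem_of_mem_erase hmem)), hy⟩
      · -- coefficient analysis at lam
        have hmax' : ∀ ν, lam < ν → d ν = 0 := fun ν hν => by
          by_contra h
          exact hmax ν (hsupp ν |>.mt h |> not_not.mp) hν
        have hA : invert (d lam) = -(d lam) := by
          have h1 := apex ι hsemi r hr hdiag d lam hmax'
          have h2 : (ι d) lam = -(d lam) := by rw [hanti]; rfl
          rw [← h1, h2]
        have hAc : ∀ n : ℤ, (d lam).coeff (-n) = -((d lam).coeff n) := fun n => by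
          have := congrArg (fun p : LaurentPolynomial ℤ => p.coeff n) hA
          simpa [invert_apply] using this
        set q : LaurentPolynomial ℤ := posP (d lam) with hq
        set z : Λ →₀ LaurentPolynomial ℤ := Finsupp.single lam q with hzdef
        have hz_eq : z = q • Finsupp.single lam (1 : LaurentPolynomial ℤ) := by
          rw [Finsupp.smul_single, smul_eq_mul, mul_one]
        have hιz : ∀ l, (ι z) l = invert q * (if l ≤ lam then r l lam else 0) := by
          intro l
          rw [hz_eq, hsemi, Finsupp.smul_apply, smul_eq_mul,
            ιsingle_apply ι r hr]
        set d' : Λ →₀ LaurentPolynomial ℤ := d - z + ι z with hd'def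
        have hιd' : ι d' = -d' := by
          rw [hd'def, map_add, map_sub, hinv, hanti]
          abel
        have hd'supp : ∀ l, l ∉ D.erase lam → d' l = 0 := by
          intro l hl
          by_cases hllam : l = lam
          · subst hllam
            have : d' l = d l - q + invert q := by
              rw [hd'def, Finsupp.add_apply, Finsupp.sub_apply, hιz,
                if_pos le_rfl, hdiag, mul_one, hzdef, Finsupp.single_eq_same]
            rw [this]
            ext n
            have hqn : q.coeff n = if 0 < n then (d l).coeff n else 0 := posP_apply _ _
            have hqn' : (invert q).coeff n = if 0 < -n then (d l).coeff (-n) else 0 := by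
              rw [invert_apply]; exact posP_apply _ _
            show (d l).coeff n - q.coeff n + (invert q).coeff n = 0
            rw [hqn, hqn']
            rcases lt_trichotomy 0 n with h | h | h
            · rw [if_pos h, if_neg (by omega)]
              ring
            · rw [if_neg (by omega), if_neg (by omega)]
              have := hAc 0
              simp only [neg_zero] at this
              have h0 : (d l).coeff 0 = 0 := by omega
              subst h; simpa using h0
            · rw [if_neg (by omega), if_pos (by omega), hAc n]
              ring
          · have hlD : l ∉ D := fun h => hl (Finset.mem_erase.mpr ⟨hllam, h⟩)
            have h1 : d l = 0 := hsupp l hlD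
            have h2 : z l = 0 := by
              rw [hzdef, Finsupp.single_apply, if_neg (fun h => hllam h.symm)]
            have h3 : (ι z) l = 0 := by
              rw [hιz, if_neg (fun h => hlD (hDC h hlamD)), mul_zero]
            rw [hd'def, Finsupp.add_apply, Finsupp.sub_apply, h1, h2, h3]
            ring
        obtain ⟨y', hy'supp, hy'⟩ := IH (D.erase lam) hcarde hDCe d' hd'supp hιd'
        refine ⟨y' + z, ?_, ?_⟩
        · intro l hl
          have h2 : z l = 0 := by
            rw [hzdef, Finsupp.single_apply,
              if_neg (fun h => hl (by rw [← h]; exact hlamD))]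
          rw [Finsupp.add_apply, h2,
            hy'supp l (fun hmem => hl (Finset.mem_of_mem_erase hmem))]
          ring
        · rw [map_add]
          have : y' + z - (ι y' + ι z) = (y' - ι y') + (z - ι z) := by abel
          rw [this, hy', hd'def]
          abel

include hsemi hr hdiag in
/-- Adjustment lemma: given a bar-invariant element congruent to `u_μ` modulo
lower terms, and canonical basis elements below `μ`, produce the canonical
basis element at `μ`. -/
lemma lemB (μ : Λ)
    (hc : ∀ l, l < μ → ∃ c : Λ →₀ LaurentPolynomial ℤ, ι c = c ∧ c l = 1 ∧
      ∀ m, m ≠ l → (c m ≠ 0 → m < l) ∧ (∀ n : ℤ, 0 ≤ n → (c m).coeff n = 0)) :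
    ∀ (N : ℕ) (D : Finset Λ), D.card ≤ N → DC D →
    ∀ x : Λ →₀ LaurentPolynomial ℤ, ι x = x → x μ = 1 →
    (∀ l, l ≠ μ → x l ≠ 0 → l < μ) →
    (∀ l, l ∉ D → l ≠ μ → ∀ n : ℤ, 0 ≤ n → (x l).coeff n = 0) →
    ∃ c : Λ →₀ LaurentPolynomial ℤ, ι c = c ∧ c μ = 1 ∧
      ∀ l, l ≠ μ → (c l ≠ 0 → l < μ) ∧ (∀ n : ℤ, 0 ≤ n → (c l).coeff n = 0) := by
  intro N
  induction N with
  | zero =>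
    intro D hcard _ x hx hxμ hxsupp hcoeff
    refine ⟨x, hx, hxμ, fun l hl => ⟨hxsupp l hl, fun n hn => ?_⟩⟩
    have hD : D = ∅ := Finset.card_eq_zero.mp (Nat.le_zero.mp hcard)
    exact hcoeff l (by simp [hD]) hl n hn
  | succ N IH =>
    intro D hcard hDC x hx hxμ hxsupp hcoeff
    by_cases hgood : ∀ l, l ≠ μ → ∀ n : ℤ, 0 ≤ n → (x l).coeff n = 0
    · exact ⟨x, hx, hxμ, fun l hl => ⟨hxsupp l hl, hgood l hl⟩⟩
    · push_neg at hgood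
      obtain ⟨l₀, hl₀μ, n₀, hn₀, hl₀⟩ := hgood
      have hl₀D : l₀ ∈ D := by
        by_contra h
        exact hl₀ (hcoeff l₀ h hl₀μ n₀ hn₀)
      obtain ⟨lam, hlamD, hmax⟩ : ∃ i ∈ D, ∀ x ∈ D, ¬ i < x := by
        obtain ⟨i, hi⟩ := Finset.exists_maximal ⟨l₀, hl₀D⟩
        exact ⟨i, hi.1, fun x hx h => lt_irrefl _ (lt_of_lt_of_le h (hi.2 hx h.le))⟩
      have hDCe : DC (D.erase lam) := DC_erase hDC hmax
      have hcarde : (D.erase lam).card ≤ N := by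
        rw [Finset.card_erase_of_mem hlamD]
        omega
      by_cases hbad : lam ≠ μ ∧ ∃ n : ℤ, 0 ≤ n ∧ (x lam).coeff n ≠ 0
      · obtain ⟨hlamμ, n₁, hn₁, hxlam⟩ := hbad
        have hxlam0 : x lam ≠ 0 := fun h0 => hxlam (by rw [h0]; rfl)
        have hlt : lam < μ := hxsupp lam hlamμ hxlam0
        obtain ⟨c, hcinv, hcdiag, hcrest⟩ := hc lam hlt
        set q : LaurentPolynomial ℤ :=
          nnegP (x lam) + invert (posP (x lam)) with hqdef
        have hq_apply : ∀ n : ℤ, q.coeff n =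
            (if 0 ≤ n then (x lam).coeff n else 0) +
            (if 0 < -n then (x lam).coeff (-n) else 0) := by
          intro n
          show (nnegP (x lam)).coeff n + (invert (posP (x lam))).coeff n = _
          rw [nnegP_apply, invert_apply, posP_apply]
        have hqinv : invert q = q := by
          ext n
          rw [invert_apply, hq_apply, hq_apply]
          rcases lt_trichotomy 0 n with h | h | h
          · rw [if_neg (by omega), if_pos (by omega), if_pos (by omega),
              if_neg (by omega), neg_neg]
            ring
          · subst h; simp
          · rw [if_pos (by omega), if_neg (by omega), if_neg (by omega),
              if_pos (by omega)]
            ring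
        set x' : Λ →₀ LaurentPolynomial ℤ := x - q • c with hx'def
        have hcμ : c μ = 0 := by
          by_contra h
          exact absurd ((hcrest μ (Ne.symm hlamμ)).1 h) (lt_asymm hlt)
        have hx'inv : ι x' = x' := by
          rw [hx'def, map_sub, hsemi, hqinv, hcinv, hx]
        have hx'μ : x' μ = 1 := by
          rw [hx'def, Finsupp.sub_apply, Finsupp.smul_apply, hcμ, hxμ]
          simp
        have hx'supp : ∀ l, l ≠ μ → x' l ≠ 0 → l < μ := by
          intro l hl hne
          by_cases hxl : x l ≠ 0
          · exact hxsupp l hl hxl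
          · push_neg at hxl
            have hcl : c l ≠ 0 := by
              intro h0
              apply hne
              rw [hx'def, Finsupp.sub_apply, Finsupp.smul_apply, hxl, h0,
                smul_zero, sub_zero]
            by_cases hllam : l = lam
            · rw [hllam]; exact hlt
            · exact lt_trans ((hcrest l hllam).1 hcl) hlt
        have hx'coeff : ∀ l, l ∉ D.erase lam → l ≠ μ → ∀ n : ℤ, 0 ≤ n →
            (x' l).coeff n = 0 := by
          intro l hl hlμ n hn
          have happ : (x' l).coeff n = (x l).coeff n - (q * c l).coeff n := by
            rw [hx'def, Finsupp.sub_apply, Finsupp.smul_apply, smul_eq_mul]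
            rfl
          by_cases hllam : l = lam
          · subst hllam
            rw [happ, hcdiag, mul_one, hq_apply, if_pos hn,
              if_neg (by omega)]
            ring
          · have hlD : l ∉ D := fun h => hl (Finset.mem_erase.mpr ⟨hllam, h⟩)
            have hcl : c l = 0 := by
              by_contra h
              exact hlD (hDC (le_of_lt ((hcrest l hllam).1 h)) hlamD)
            rw [happ, hcl, mul_zero, hcoeff l hlD hlμ n hn]
            rfl
        exact IH (D.erase lam) hcarde hDCe x' hx'inv hx'μ hx'supp hx'coeff
      · apply IH (D.erase lam) hcarde hDCe x hx hxμ hxsupp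
        intro l hl hlμ n hn
        by_cases hllam : l = lam
        · subst hllam
          by_contra h
          exact hbad ⟨hlμ, n, hn, h⟩
        · exact hcoeff l (fun h => hl (Finset.mem_erase.mpr ⟨hllam, h⟩)) hlμ n hn

end KLAux

/-- Kazhdan–Lusztig lemma: over `A = ℤ[v,v⁻¹]` with the bar involution
`v ↦ v⁻¹` (`LaurentPolynomial.invert`), let `M` be the free `A`-module on a
finite poset `Λ` with standard basis `u_λ`, and let `ι : M → M` be an additive
bar-semilinear involution with `ι(u_μ) = Σ_{λ ≤ μ} r_{λ,μ} u_λ`, `r_{μ,μ} = 1`.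
Then for each `μ` there is a unique bar-invariant `c_μ` lying in
`u_μ + Σ_{λ < μ} v⁻¹ℤ[v⁻¹] u_λ` (i.e. `c_μ μ = 1`, the other coefficients are
supported on `λ < μ` and have zero coefficients in degrees `≥ 0`). -/
theorem exists_unique_canonical_basis_element
    (Λ : Type*) [Fintype Λ] [PartialOrder Λ] [DecidableEq Λ]
    [DecidableRel ((· ≤ ·) : Λ → Λ → Prop)]
    (ι : (Λ →₀ LaurentPolynomial ℤ) →+ (Λ →₀ LaurentPolynomial ℤ))
    (hsemi : ∀ (p : LaurentPolynomial ℤ) (x : Λ →₀ LaurentPolynomial ℤ),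
      ι (p • x) = (invert p : LaurentPolynomial ℤ) • ι x)
    (hinv : ∀ x, ι (ι x) = x)
    (r : Λ → Λ → LaurentPolynomial ℤ)
    (hr : ∀ μ : Λ, ι (Finsupp.single μ 1)
      = ∑ l ∈ univ.filter (fun l => l ≤ μ), Finsupp.single l (r l μ))
    (hdiag : ∀ μ : Λ, r μ μ = 1) :
    ∀ μ : Λ, ∃! c : Λ →₀ LaurentPolynomial ℤ,
      ι c = c ∧ c μ = 1 ∧
      ∀ l : Λ, l ≠ μ →
        (c l ≠ 0 → l < μ) ∧ (∀ n : ℤ, 0 ≤ n → ((c l).coeff : ℤ →₀ ℤ) n = 0) := by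
  -- the property
  -- existence by well-founded induction
  have exist : ∀ μ : Λ, ∃ c : Λ →₀ LaurentPolynomial ℤ,
      ι c = c ∧ c μ = 1 ∧
      ∀ l : Λ, l ≠ μ →
        (c l ≠ 0 → l < μ) ∧ (∀ n : ℤ, 0 ≤ n → (c l).coeff n = 0) := by
    intro μ
    induction μ using WellFoundedLT.induction with
    | _ μ IH =>
      haveI : DecidablePred (fun l : Λ => l < μ) := fun l =>
        decidable_of_iff (l ≤ μ ∧ ¬ μ ≤ l) lt_iff_le_not_ge.symm
      set u : Λ →₀ LaurentPolynomial ℤ := Finsupp.single μ 1 with hu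
      set d₀ : Λ →₀ LaurentPolynomial ℤ := ι u - u with hd₀
      have hanti : ι d₀ = -d₀ := by
        rw [hd₀, map_sub, hinv]
        abel
      set D : Finset Λ := univ.filter (fun l => l < μ) with hD
      have hDC : KLAux.DC D := by
        intro a b hab hb
        rw [hD, Finset.mem_filter] at hb ⊢
        exact ⟨mem_univ a, lt_of_le_of_lt hab hb.2⟩
      have hd₀supp : ∀ l, l ∉ D → d₀ l = 0 := by
        intro l hl
        rw [hD, Finset.mem_filter] at hl
        push_neg at hl
        have hnlt : ¬ l < μ := hl (mem_univ l)
        rw [hd₀, Finsupp.sub_apply, KLAux.ιsingle_apply ι r hr, hu]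
        by_cases hlμ : l = μ
        · subst hlμ
          rw [if_pos le_rfl, hdiag, Finsupp.single_eq_same]
          ring
        · rw [if_neg (fun h => hnlt (lt_of_le_of_ne h hlμ)),
            Finsupp.single_apply, if_neg (fun h => hlμ h.symm)]
          ring
      obtain ⟨y, hysupp, hy⟩ := KLAux.lemA ι hsemi hinv r hr hdiag
        D.card D le_rfl hDC d₀ hd₀supp hanti
      set x : Λ →₀ LaurentPolynomial ℤ := u + y with hxdef
      have hμD : μ ∉ D := by
        rw [hD, Finset.mem_filter]
        push_neg
        exact fun _ => lt_irrefl μ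
      have hxinv : ι x = x := by
        have hιu : ι u = u + d₀ := by rw [hd₀]; abel
        have hιy : ι y = y - d₀ := by rw [← hy]; abel
        rw [hxdef, map_add, hιu, hιy]
        abel
      have hxμ : x μ = 1 := by
        rw [hxdef, Finsupp.add_apply, hysupp μ hμD, hu, Finsupp.single_eq_same]
        ring
      have hxsupp : ∀ l, l ≠ μ → x l ≠ 0 → l < μ := by
        intro l hl hne
        by_contra hnlt
        apply hne
        have hlD : l ∉ D := by
          rw [hD, Finset.mem_filter]
          exact fun h => hnlt h.2
        rw [hxdef, Finsupp.add_apply, hysupp l hlD, hu, Finsupp.single_apply,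
          if_neg (fun h => hl h.symm)]
        ring
      have hxcoeff : ∀ l, l ∉ D → l ≠ μ → ∀ n : ℤ, 0 ≤ n → (x l).coeff n = 0 := by
        intro l hl hlμ n _
        have : x l = 0 := by
          rw [hxdef, Finsupp.add_apply, hysupp l hl, hu, Finsupp.single_apply,
            if_neg (fun h => hlμ h.symm)]
          ring
        rw [this]; rfl
      have hc : ∀ l, l < μ → ∃ c : Λ →₀ LaurentPolynomial ℤ, ι c = c ∧
          c l = 1 ∧ ∀ m, m ≠ l → (c m ≠ 0 → m < l) ∧
            (∀ n : ℤ, 0 ≤ n → (c m).coeff n = 0) := by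
        intro l hl
        obtain ⟨c, h1, h2, h3⟩ := IH l hl
        exact ⟨c, h1, h2, h3⟩
      exact KLAux.lemB ι hsemi r hr hdiag μ hc
        D.card D le_rfl hDC x hxinv hxμ hxsupp hxcoeff
  -- uniqueness
  intro μ
  obtain ⟨c, h1, h2, h3⟩ := exist μ
  refine ⟨c, ⟨h1, h2, h3⟩, fun c' hcc' => ?_⟩
  obtain ⟨h1', h2', h3'⟩ := hcc'
  by_contra hne
  set d : Λ →₀ LaurentPolynomial ℤ := c' - c with hd
  have hdne : d ≠ 0 := fun h0 => by
    rw [hd] at h0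
    exact hne (sub_eq_zero.mp h0)
  have hsuppne : d.support.Nonempty := Finsupp.support_nonempty_iff.mpr hdne
  obtain ⟨lam, hlam, hmax⟩ : ∃ i ∈ d.support, ∀ x ∈ d.support, ¬ i < x := by
    obtain ⟨i, hi⟩ := Finset.exists_maximal hsuppne
    exact ⟨i, hi.1, fun x hx h => lt_irrefl _ (lt_of_lt_of_le h (hi.2 hx h.le))⟩
  have hdlam : d lam ≠ 0 := Finsupp.mem_support_iff.mp hlam
  have hmax' : ∀ ν, lam < ν → d ν = 0 := fun ν hν => by
    by_contra h
    exact hmax ν (Finsupp.mem_support_iff.mpr h) hν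
  have hιd : ι d = d := by rw [hd, map_sub, h1, h1']
  have hinvd : invert (d lam) = d lam := by
    have := KLAux.apex ι hsemi r hr hdiag d lam hmax'
    rw [hιd] at this
    exact this.symm
  have hlamμ : lam ≠ μ := by
    rintro rfl
    apply hdlam
    rw [hd, Finsupp.sub_apply, h2, h2']
    ring
  have hpos : ∀ n : ℤ, 0 ≤ n → (d lam).coeff n = 0 := by
    intro n hn
    have e1 : (c' lam).coeff n = 0 := (h3' lam hlamμ).2 n hn
    have e2 : (c lam).coeff n = 0 := (h3 lam hlamμ).2 n hn
    rw [hd, Finsupp.sub_apply]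
    show (c' lam).coeff n - (c lam).coeff n = 0
    rw [e1, e2]; ring
  apply hdlam
  ext n
  rcases le_or_gt 0 n with h | h
  · rw [hpos n h]; rfl
  · have := congrArg (fun p : LaurentPolynomial ℤ => p.coeff n) hinvd
    simp only [invert_apply] at this
    rw [← this, hpos (-n) (by omega)]
    rfl
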